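/- In a finite connected weighted graph with pairwise distinct edge weights, for any nonempty proper subset F of vertices, the minimum-weight edge crossing the cut (F, V \ F) belongs to the (unique) minimum spanning tree. -/

import Mathlib

def IsSpanningTree {V : Type*} (G : SimpleGraph V) (T : Set (Sym2 V)) : Prop :=
  T ⊆ G.edgeSet ∧ (SimpleGraph.fromEdgeSet T).Connected ∧
    (SimpleGraph.fromEdgeSet T).IsAcyclic

def IsMST {V : Type*} [Fintype V] [DecidableEq V] (G : SimpleGraph V)
    (w : Sym2 V → ℚ) (T : Finset (Sym2 V)) : Prop :=
  IsSpanningTree G (↑T : Set (Sym2 V)) ∧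
    ∀ T' : Finset (Sym2 V), IsSpanningTree G (↑T' : Set (Sym2 V)) →
      ∑ e ∈ T, w e ≤ ∑ e ∈ T', w e

/-- `e` crosses the cut `(F, V \ F)`: it is an edge of `G` with exactly one
endpoint in `F`. -/
def CrossesCut {V : Type*} (G : SimpleGraph V) (F : Set V) (e : Sym2 V) : Prop :=
  e ∈ G.edgeSet ∧ ∃ u v : V, e = s(u, v) ∧ u ∈ F ∧ v ∉ F

/-- Decompose a walk at a dart occurring in it. -/
lemma walk_dart_decomp {V : Type*} {G : SimpleGraph V} {u v : V}
    (p : G.Walk u v) (d : G.Dart) (hd : d ∈ p.darts) :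
    ∃ (q1 : G.Walk u d.fst) (q2 : G.Walk d.snd v),
      p = q1.append (SimpleGraph.Walk.cons d.adj q2) := by
  induction p with
  | nil => simp at hd
  | @cons x y z h q ih =>
    rw [SimpleGraph.Walk.darts_cons, List.mem_cons] at hd
    rcases hd with hd | hd
    · obtain ⟨⟨df, ds⟩, hadj⟩ := d
      cases hd
      exact ⟨SimpleGraph.Walk.nil, q, rfl⟩
    · obtain ⟨q1, q2, hq⟩ := ih hd
      exact ⟨SimpleGraph.Walk.cons h q1, q2, by rw [hq]; rfl⟩

/-- Cut property: with pairwise distinct edge weights, the minimum-weight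
edge crossing any nonempty proper cut belongs to every (hence the unique)
minimum spanning tree. -/
theorem min_cut_edge_mem_mst {V : Type*} [Fintype V] [DecidableEq V]
    (G : SimpleGraph V) (hG : G.Connected)
    (w : Sym2 V → ℚ) (hw : Set.InjOn w G.edgeSet)
    (F : Set V) (hF : F.Nonempty) (hF' : F ≠ Set.univ)
    (e : Sym2 V) (he : CrossesCut G F e)
    (hmin : ∀ e', CrossesCut G F e' → w e ≤ w e')
    (T : Finset (Sym2 V)) (hT : IsMST G w T) :
    e ∈ T := by
  classical
  obtain ⟨⟨hsub, hconn, hacyc⟩, hmins⟩ := hT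
  obtain ⟨heG, u, v, rfl, huF, hvF⟩ := he
  have huv : u ≠ v := (G.mem_edgeSet.mp heG).ne
  by_contra hc
  set H := SimpleGraph.fromEdgeSet (↑T : Set (Sym2 V)) with hH
  have htree : H.IsTree := ⟨hconn, hacyc⟩
  have hne : Nonempty V := ⟨hF.some⟩
  -- a path from u to v in the tree
  obtain ⟨p0⟩ := hconn.preconnected u v
  set p : H.Walk u v := p0.toPath.val with hpdef
  have hp : p.IsPath := p0.toPath.property
  -- boundary dart
  obtain ⟨d, hdp, hdF1, hdF2⟩ := p.exists_boundary_dart F huF hvF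
  have hedge : d.edge = s(d.fst, d.snd) := rfl
  have he'p : d.edge ∈ p.edges := List.mem_map_of_mem (f := SimpleGraph.Dart.edge) hdp
  have he'H : d.edge ∈ H.edgeSet := p.edges_subset_edgeSet he'p
  have he'T : d.edge ∈ T := by
    have h2 : H.edgeSet ⊆ (↑T : Set (Sym2 V)) := by
      rw [hH, SimpleGraph.edgeSet_fromEdgeSet]; exact Set.diff_subset
    exact Finset.mem_coe.mp (h2 he'H)
  have he'G : d.edge ∈ G.edgeSet := hsub (Finset.mem_coe.mpr he'T)
  have hcross : CrossesCut G F d.edge := ⟨he'G, d.fst, d.snd, hedge, hdF1, hdF2⟩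
  have hne' : s(u, v) ≠ d.edge := fun h => hc (h ▸ he'T)
  have hlt : w s(u, v) < w d.edge :=
    lt_of_le_of_ne (hmin _ hcross) (fun h => hne' (hw heG he'G h))
  set T' : Finset (Sym2 V) := insert s(u, v) (T.erase d.edge) with hT'def
  set H' := SimpleGraph.fromEdgeSet (↑T' : Set (Sym2 V)) with hH'
  -- membership helpers
  have huvT' : s(u, v) ∈ T' := Finset.mem_insert_self _ _
  have hadjuv : H'.Adj u v := by
    rw [hH', SimpleGraph.fromEdgeSet_adj]
    exact ⟨Finset.mem_coe.mpr huvT', huv⟩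
  have hEmem : ∀ f ∈ T.erase d.edge, f ∈ (↑T' : Set (Sym2 V)) := by
    intro f hf
    exact Finset.mem_coe.mpr (Finset.mem_insert_of_mem hf)
  -- edges of H which are not d.edge are edges of H'
  have hHtoH' : ∀ f ∈ H.edgeSet, f ≠ d.edge → f ∈ H'.edgeSet := by
    intro f hf hfe
    rw [hH, SimpleGraph.edgeSet_fromEdgeSet] at hf
    rw [hH', SimpleGraph.edgeSet_fromEdgeSet]
    exact ⟨hEmem f (Finset.mem_erase.mpr ⟨hfe, Finset.mem_coe.mp hf.1⟩), hf.2⟩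
  -- edges of H' other than s(u,v) are edges of H and differ from d.edge
  have hH'toH : ∀ f ∈ H'.edgeSet, f ≠ s(u, v) → f ∈ H.edgeSet ∧ f ≠ d.edge := by
    intro f hf hfe
    rw [hH', SimpleGraph.edgeSet_fromEdgeSet] at hf
    obtain ⟨hf1, hf2⟩ := hf
    have hf1' : f ∈ T' := Finset.mem_coe.mp hf1
    rw [hT'def, Finset.mem_insert] at hf1'
    rcases hf1' with h | h
    · exact absurd h hfe
    · refine ⟨?_, (Finset.mem_erase.mp h).1⟩
      rw [hH, SimpleGraph.edgeSet_fromEdgeSet]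
      exact ⟨Finset.mem_coe.mpr (Finset.mem_of_mem_erase h), hf2⟩
  -- decompose the path at the dart
  obtain ⟨q1, q2, hpq⟩ := walk_dart_decomp p d hdp
  have hnodup : p.edges.Nodup := hp.edges_nodup
  have hedges : p.edges = q1.edges ++ (d.edge :: q2.edges) := by
    rw [hpq, SimpleGraph.Walk.edges_append, SimpleGraph.Walk.edges_cons, hedge]
  have he'q1 : d.edge ∉ q1.edges := by
    rw [hedges] at hnodup
    intro hmem
    exact (List.disjoint_of_nodup_append hnodup) hmem List.mem_cons_self
  have he'q2 : d.edge ∉ q2.edges := by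
    rw [hedges] at hnodup
    exact (List.nodup_cons.mp (List.nodup_append.mp hnodup).2.1).1
  -- transfer the two path segments to H'
  have hq1t : ∀ f ∈ q1.edges, f ∈ H'.edgeSet := by
    intro f hf
    have hfH : f ∈ H.edgeSet := q1.edges_subset_edgeSet hf
    exact hHtoH' f hfH (fun h => he'q1 (h ▸ hf))
  have hq2t : ∀ f ∈ q2.edges, f ∈ H'.edgeSet := by
    intro f hf
    have hfH : f ∈ H.edgeSet := q2.edges_subset_edgeSet hf
    exact hHtoH' f hfH (fun h => he'q2 (h ▸ hf))
  have reach1 : H'.Reachable u d.fst := ⟨q1.transfer H' hq1t⟩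
  have reach2 : H'.Reachable d.snd v := ⟨q2.transfer H' hq2t⟩
  have hab : H'.Reachable d.fst d.snd :=
    reach1.symm.trans (hadjuv.reachable.trans reach2.symm)
  -- connectivity of H'
  have key : ∀ {x y : V}, H.Reachable x y → H'.Reachable x y := by
    intro x y hxy
    obtain ⟨q⟩ := hxy
    induction q with
    | nil => exact SimpleGraph.Reachable.refl _
    | @cons x x' y h q ih =>
      have hEdge : s(x, x') ∈ H.edgeSet := H.mem_edgeSet.mpr h
      by_cases hcase : s(x, x') = d.edge
      · have hx : (x = d.fst ∧ x' = d.snd) ∨ (x = d.snd ∧ x' = d.fst) := by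
          rw [hedge] at hcase
          exact Sym2.eq_iff.mp hcase
        rcases hx with ⟨rfl, rfl⟩ | ⟨rfl, rfl⟩
        · exact hab.trans ih
        · exact hab.symm.trans ih
      · have : H'.Adj x x' := by
          rw [hH', SimpleGraph.fromEdgeSet_adj]
          have := hHtoH' _ hEdge hcase
          rw [hH', SimpleGraph.edgeSet_fromEdgeSet] at this
          exact ⟨this.1, h.ne⟩
        exact this.reachable.trans ih
  have H'conn : H'.Connected := by
    rw [SimpleGraph.connected_iff]
    exact ⟨fun x y => key (hconn.preconnected x y), hne⟩
  -- s(u,v) is a bridge in H'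
  have hbridge : H'.IsBridge s(u, v) := by
    rw [SimpleGraph.isBridge_iff_adj_and_forall_walk_mem_edges]
    refine fun q => ?_
    by_contra hq
    have hqt : ∀ f ∈ q.edges, f ∈ H.edgeSet := by
      intro f hf
      exact (hH'toH f (q.edges_subset_edgeSet hf) (fun h => hq (h ▸ hf))).1
    have hqd : ∀ f ∈ q.edges, f ≠ d.edge := by
      intro f hf
      exact (hH'toH f (q.edges_subset_edgeSet hf) (fun h => hq (h ▸ hf))).2
    set q' : H.Walk u v := q.transfer H hqt with hq'def
    have hq'edges : q'.edges = q.edges := q.edges_transfer hqt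
    have huniq := htree.existsUnique_path u v
    obtain ⟨P, hP, hPuniq⟩ := huniq
    have h1 : q'.toPath.val = P := hPuniq _ q'.toPath.property
    have h2 : p = P := hPuniq _ hp
    have hdin : d.edge ∈ q'.toPath.val.edges := by
      rw [h1, ← h2]; exact he'p
    have := SimpleGraph.Walk.edges_toPath_subset q' hdin
    rw [hq'edges] at this
    exact hqd _ this rfl
  -- H' is acyclic
  have hacyc' : H'.IsAcyclic := by
    intro x c hcyc
    by_cases hec : s(u, v) ∈ c.edges
    · exact (SimpleGraph.isBridge_iff_forall_cycle_notMem (H'.mem_edgeSet.mpr hadjuv)).mp hbridge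
        c hcyc hec
    · have hct : ∀ f ∈ c.edges, f ∈ H.edgeSet := by
        intro f hf
        exact (hH'toH f (c.edges_subset_edgeSet hf) (fun h => hec (h ▸ hf))).1
      exact hacyc (c.transfer H hct) (hcyc.transfer hct)
  -- T' is a spanning tree
  have hsub' : (↑T' : Set (Sym2 V)) ⊆ G.edgeSet := by
    intro f hf
    have hf' : f ∈ T' := Finset.mem_coe.mp hf
    rw [hT'def, Finset.mem_insert] at hf'
    rcases hf' with rfl | h
    · exact heG
    · exact hsub (Finset.mem_coe.mpr (Finset.mem_of_mem_erase h))
  have hST' : IsSpanningTree G (↑T' : Set (Sym2 V)) := ⟨hsub', H'conn, hacyc'⟩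
  -- weight comparison
  have hnotmem : s(u, v) ∉ T.erase d.edge := fun h => hc (Finset.mem_of_mem_erase h)
  have hsum : ∑ f ∈ T', w f < ∑ f ∈ T, w f := by
    rw [hT'def, Finset.sum_insert hnotmem]
    have := Finset.add_sum_erase T w he'T
    linarith
  exact absurd (hmins T' hST') (not_le.mpr hsum)
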